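/- For all points x, y in the open unit ball 𝔹ⁿ one has tanh(ρ(x,y)/4) ≥ |x−y| / ( 1 + |x||y| + √(1 + |x|²|y|²) − (|x|² + |y|²)/(2√(1 + |x|²|y|²)) ). -/

import Mathlib

lemma tanh_half_arsinh (s : ℝ) :
    Real.tanh (Real.arsinh s / 2) = s / (1 + Real.sqrt (1 + s ^ 2)) := by
  set u := Real.arsinh s / 2 with hu
  have h2u : 2 * u = Real.arsinh s := by rw [hu]; ring
  have hs : 2 * Real.sinh u * Real.cosh u = s := by
    rw [← Real.sinh_two_mul, h2u, Real.sinh_arsinh]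
  have hc : Real.cosh u ^ 2 + Real.sinh u ^ 2 = Real.sqrt (1 + s ^ 2) := by
    have h := Real.cosh_two_mul u
    rw [h2u, Real.cosh_arsinh] at h
    have := Real.sinh_sq u
    linarith
  have hcu : (0:ℝ) < Real.cosh u := Real.cosh_pos u
  rw [Real.tanh_eq_sinh_div_cosh, ← hc, ← hs]
  rw [div_eq_div_iff hcu.ne' (by nlinarith [Real.sinh_sq u])]
  rw [Real.sinh_sq]; ring

/-- Hyperbolic distance in the open unit ball of `ℝⁿ`:
`ρ(x,y) = 2 · arsinh(|x−y| / (√(1−|x|²)·√(1−|y|²)))`. -/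
noncomputable def hypDistBall {n : ℕ} (x y : EuclideanSpace ℝ (Fin n)) : ℝ :=
  2 * Real.arsinh (‖x - y‖ / (Real.sqrt (1 - ‖x‖ ^ 2) * Real.sqrt (1 - ‖y‖ ^ 2)))

theorem tanh_quarter_hypDist_lower_bound_four {n : ℕ} (x y : EuclideanSpace ℝ (Fin n))
    (hx : ‖x‖ < 1) (hy : ‖y‖ < 1) :
    Real.tanh (hypDistBall x y / 4) ≥
      ‖x - y‖ / (1 + ‖x‖ * ‖y‖ + Real.sqrt (1 + ‖x‖ ^ 2 * ‖y‖ ^ 2) -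
        (‖x‖ ^ 2 + ‖y‖ ^ 2) / (2 * Real.sqrt (1 + ‖x‖ ^ 2 * ‖y‖ ^ 2))) := by
  set a := ‖x‖ with ha
  set b := ‖y‖ with hb
  set d := ‖x - y‖ with hd
  set P := Real.sqrt (1 - a ^ 2) * Real.sqrt (1 - b ^ 2) with hPdef
  set t := Real.sqrt (1 + a ^ 2 * b ^ 2) with htdef
  have hquart : hypDistBall x y / 4 = Real.arsinh (d / P) / 2 := by
    rw [hypDistBall, ← ha, ← hb, ← hd, ← hPdef]; ring
  have hdab : d ≤ a + b := norm_sub_le x y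
  have ha0 : 0 ≤ a := norm_nonneg x
  have hb0 : 0 ≤ b := norm_nonneg y
  have hd0 : 0 ≤ d := norm_nonneg _
  clear_value a b d
  have hP : 0 < P := mul_pos (Real.sqrt_pos.2 (by nlinarith)) (Real.sqrt_pos.2 (by nlinarith))
  have hP2 : P ^ 2 = (1 - a ^ 2) * (1 - b ^ 2) := by
    rw [hPdef, mul_pow, Real.sq_sqrt (by nlinarith), Real.sq_sqrt (by nlinarith)]
  have ht : 0 < t := Real.sqrt_pos.2 (by positivity)
  have ht2 : t ^ 2 = 1 + a ^ 2 * b ^ 2 := Real.sq_sqrt (by positivity)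
  clear_value P t
  set r := Real.sqrt (P ^ 2 + d ^ 2) with hrdef
  have hr0 : 0 ≤ r := Real.sqrt_nonneg _
  have hr2 : r ^ 2 = P ^ 2 + d ^ 2 := Real.sq_sqrt (by positivity)
  -- LHS = d / (P + r)
  have hLHS : Real.tanh (hypDistBall x y / 4) = d / (P + r) := by
    rw [hquart, tanh_half_arsinh]
    have hsq : Real.sqrt (1 + (d / P) ^ 2) = r / P := by
      rw [hrdef, eq_div_iff hP.ne', ← Real.sqrt_sq hP.le, ← Real.sqrt_mul (by positivity)]
      congr 1
      field_simp
      rw [Real.sq_sqrt (by positivity)]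
    have hPr0 : P + r ≠ 0 := by positivity
    rw [hsq, show (1:ℝ) + r / P = (P + r) / P by field_simp, div_div_div_eq]
    rw [mul_comm P (P + r), mul_div_mul_right _ _ hP.ne']
  clear_value r
  rw [hLHS]
  -- r ≤ 1 + a*b
  have hrle : r ≤ 1 + a * b := by
    rw [hrdef, show (1 : ℝ) + a * b = Real.sqrt ((1 + a * b) ^ 2) from
      (Real.sqrt_sq (by positivity)).symm]
    apply Real.sqrt_le_sqrt
    nlinarith
  -- P <= t - (a^2+b^2)/(2t)
  have hPle : P ≤ t - (a ^ 2 + b ^ 2) / (2 * t) := by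
    have h1 : 2 * P * t ≤ P ^ 2 + t ^ 2 := by nlinarith [sq_nonneg (P - t)]
    have h2 : (a ^ 2 + b ^ 2) / (2 * t) ≤ t - P := by
      rw [div_le_iff₀ (by positivity)]
      nlinarith
    linarith
  have hPr : 0 < P + r := by linarith
  have hQ : P + r ≤ 1 + a * b + t - (a ^ 2 + b ^ 2) / (2 * t) := by linarith
  exact div_le_div_of_nonneg_left hd0 hPr hQ
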